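/- arXiv:1011.5971 — 2 statements merged into one kernel-verified Lean document; each statement's English description precedes it below -/
import Mathlib

section
/- With the run-length decomposition of the directive word x_1x_2⋯ = y_1^{d_1}y_2^{d_2}⋯ (y_i ≠ y_{i+1}, d_i > 0) and g(m) = d_1+⋯+d_{m-1}+1, one has u_{g(m+1)} = (h_{g(m)-1})^{d_m} (h_{g(m-1)-1})^{d_{m-1}} ⋯ (h_0)^{d_1} = (\bar{h_0})^{d_1}(\bar{h_1})^{d_2}⋯(\bar{h_{g(m)-1}})^{d_m}. -/
variable {A : Type*} [DecidableEq A]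

/-- `psiW a` is the morphism with `ψ_a(a) = a` and `ψ_a(x) = ax` for `x ≠ a`. -/
def psiW (a : A) (w : List A) : List A :=
  w.flatMap (fun b => if b = a then [a] else [a, b])

/-- `muW x n = ψ_{x 1} ∘ ⋯ ∘ ψ_{x n}`. -/
def muW (x : ℕ → A) : ℕ → List A → List A
  | 0 => id
  | n + 1 => fun w => muW x n (psiW (x (n + 1)) w)

/-- `hW x n = μ_n (x_{n+1})`. -/
def hW (x : ℕ → A) (n : ℕ) : List A := muW x n [x (n + 1)]

/-- `p` is the palindromic right-closure of `w`: the shortest palindrome having `w`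
as a prefix. -/
def IsPalClosure (w p : List A) : Prop :=
  w <+: p ∧ p.reverse = p ∧
    ∀ q : List A, w <+: q → q.reverse = q → p.length ≤ q.length

/-- The finite word `w` is a prefix of the infinite word `s`. -/
def PrefInf (w : List A) (s : ℕ → A) : Prop :=
  ∀ i : ℕ, ∀ h : i < w.length, w[i] = s i

/-- Number of occurrences (positions) of `w` as a factor of `v`. -/
def occ (w v : List A) : ℕ :=
  (List.range (v.length + 1)).countP
    (fun i => decide (i + w.length ≤ v.length ∧ (v.drop i).take w.length = w))

/-- `cat z k = z 1 ++ z 2 ++ ⋯ ++ z k`. -/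
def cat (z : ℕ → List A) (k : ℕ) : List A := ((List.range' 1 k).map z).flatten

/-- `z` is the Ziv-Lempel factorization of the infinite word `s`: each `z m` is
the shortest prefix of `z m · z (m+1) ⋯` occurring only once in `z 1 ⋯ z m`. -/
def IsZFact (s : ℕ → A) (z : ℕ → List A) : Prop :=
  ∀ m : ℕ, 1 ≤ m → z m ≠ [] ∧ PrefInf (cat z m) s ∧
    occ (z m) (cat z m) = 1 ∧
    ∀ p : List A, p <+: z m → p ≠ z m → 2 ≤ occ p (cat z m)

/-- `c` is the Crochemore factorization of the infinite word `s`: each `c m` is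
either a fresh letter, or the longest prefix of `c m · c (m+1) ⋯` occurring
twice in `c 1 ⋯ c m`. -/
def IsCFact (s : ℕ → A) (c : ℕ → List A) : Prop :=
  ∀ m : ℕ, 1 ≤ m → c m ≠ [] ∧ PrefInf (cat c m) s ∧
    ((∃ a : A, c m = [a] ∧ a ∉ cat c (m - 1)) ∨
      (2 ≤ occ (c m) (cat c m) ∧
        occ (c m ++ [s (cat c m).length]) (cat c m ++ [s (cat c m).length]) = 1))

namespace PalAux
variable (a : A)

theorem psiW_nil : psiW a [] = [] := rfl

theorem psiW_append (u v : List A) : psiW a (u ++ v) = psiW a u ++ psiW a v :=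
  List.flatMap_append ..

theorem psiW_cons (c : A) (w : List A) :
    psiW a (c :: w) = (if c = a then [a] else [a, c]) ++ psiW a w := rfl

theorem psiW_singleton (c : A) :
    psiW a [c] = if c = a then [a] else [a, c] := by
  simp [psiW]

theorem psiW_ne_nil {w : List A} (h : w ≠ []) : psiW a w ≠ [] := by
  cases w with
  | nil => simp at h
  | cons c w =>
    rw [psiW_cons]
    split <;> simp

theorem psiW_head (c : A) (w : List A) : ∃ r, psiW a (c :: w) = a :: r := by
  rw [psiW_cons]; split <;> simp

/-- helper H -/
theorem rev_psiW (w : List A) :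
    a :: (psiW a w).reverse = psiW a w.reverse ++ [a] := by
  induction w with
  | nil => simp [psiW]
  | cons c w ih =>
    rw [psiW_cons, List.reverse_append, List.reverse_cons, psiW_append]
    rw [show (a :: ((psiW a w).reverse ++ (if c = a then [a] else [a, c]).reverse)) =
      (a :: (psiW a w).reverse) ++ (if c = a then [a] else [a, c]).reverse from rfl, ih]
    rw [psiW_singleton]
    by_cases hc : c = a <;> simp [hc]

theorem psiW_inj {u v : List A} (h : psiW a u = psiW a v) : u = v := by
  induction u generalizing v with
  | nil =>
    cases v with
    | nil => rfl
    | cons e v => exact absurd h.symm (by rw [psiW_nil]; exact psiW_ne_nil a (by simp))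
  | cons c u ih =>
    cases v with
    | nil => exact absurd h (by rw [psiW_nil]; exact psiW_ne_nil a (by simp))
    | cons e v =>
      rw [psiW_cons, psiW_cons] at h
      by_cases hc : c = a <;> by_cases he : e = a <;> simp [hc, he] at h
      · rw [hc, he, ih h]
      · obtain ⟨r, hr⟩ := psiW_head a e v  -- psiW a u = e :: psiW a v, u arbitrary
        -- h : psiW a u = e :: psiW a v ; first letter of psiW a u is a if u ≠ []
        cases u with
        | nil => rw [psiW_nil] at h; exact absurd h.symm (by simp)
        | cons c' u' =>
          obtain ⟨r', hr'⟩ := psiW_head a c' u'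
          rw [hr'] at h
          exact absurd (List.head_eq_of_cons_eq h).symm he
      · cases v with
        | nil => rw [psiW_nil] at h; simp at h
        | cons e' v' =>
          obtain ⟨r', hr'⟩ := psiW_head a e' v'
          rw [hr'] at h
          exact absurd (List.head_eq_of_cons_eq h) hc
      · obtain ⟨h1, h2⟩ := h
        rw [h1, ih h2]

theorem psiW_pal_iff (w : List A) :
    (psiW a w ++ [a]).reverse = psiW a w ++ [a] ↔ w.reverse = w := by
  rw [List.reverse_append, List.reverse_singleton]
  constructor
  · intro h
    have := rev_psiW a w
    rw [show [a] ++ (psiW a w).reverse = a :: (psiW a w).reverse from rfl, this] at h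
    have := List.append_inj_left' h rfl
    exact psiW_inj a this
  · intro h
    rw [show [a] ++ (psiW a w).reverse = a :: (psiW a w).reverse from rfl, rev_psiW, h]


/-- index of the longest palindromic suffix -/
def kk (v : List A) : ℕ :=
  Nat.find (⟨v.length, by simp⟩ : ∃ k, (v.drop k).reverse = v.drop k)

theorem kk_spec (v : List A) : (v.drop (kk v)).reverse = v.drop (kk v) := by
  exact Nat.find_spec (⟨v.length, by simp⟩ : ∃ k, (v.drop k).reverse = v.drop k)

theorem kk_min {v : List A} {j : ℕ} (h : (v.drop j).reverse = v.drop j) : kk v ≤ j := by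
  exact Nat.find_min' (⟨v.length, by simp⟩ : ∃ k, (v.drop k).reverse = v.drop k) h

theorem kk_le (v : List A) : kk v ≤ v.length :=
  kk_min (by simp)

theorem kk_singleton (c : A) : kk [c] = 0 :=
  Nat.le_zero.mp (kk_min (by simp))

/-- the palindromic closure -/
def Pc (v : List A) : List A := v ++ (v.take (kk v)).reverse

theorem Pc_eq (v : List A) :
    Pc v = v.take (kk v) ++ v.drop (kk v) ++ (v.take (kk v)).reverse := by
  rw [Pc, List.take_append_drop]

theorem Pc_length (v : List A) : (Pc v).length = v.length + kk v := by
  rw [Pc]; simp [min_eq_left (kk_le v)]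

theorem Pc_prefix (v : List A) : v <+: Pc v := ⟨_, rfl⟩

theorem Pc_pal (v : List A) : (Pc v).reverse = Pc v := by
  rw [Pc_eq]
  simp only [List.reverse_append, List.reverse_reverse, List.append_assoc]
  rw [kk_spec]

omit [DecidableEq A] in
theorem pal_getElem {q : List A} (hq : q.reverse = q) (i : ℕ) (h : i < q.length) :
    q[i] = q[q.length - 1 - i]'(by omega) :=
  (List.getElem_of_eq hq.symm h).trans (List.getElem_reverse (by simpa using h))

theorem Pc_min {v q : List A} (hpre : v <+: q) (hq : q.reverse = q) :
    (Pc v).length ≤ q.length := by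
  rcases le_or_gt (2 * v.length) q.length with hle | hlt
  · rw [Pc_length]
    have := kk_le v
    omega
  · have hvq := hpre.length_le
    set j := q.length - v.length with hj
    have hjv : j < v.length := by omega
    have hdrop : (v.drop j).reverse = v.drop j := by
      apply List.ext_getElem (by simp)
      intro i h1 h2
      rw [List.getElem_reverse]
      simp only [List.getElem_drop]
      simp only [List.length_reverse, List.length_drop] at h1
      have e1 : v[j + (v.length - j - 1 - i)]'(by omega) = q[j + (v.length - j - 1 - i)]'(by omega) :=
        List.IsPrefix.getElem hpre (by omega)
      have e2 : v[j + i]'(by omega) = q[j + i]'(by omega) := List.IsPrefix.getElem hpre (by omega)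
      simp only [List.length_drop]
      rw [e1, e2, pal_getElem hq (j + i) (by omega)]
      congr 1
      omega
    have := kk_min hdrop
    rw [Pc_length]
    omega

theorem Pc_isPalClosure (v : List A) : IsPalClosure v (Pc v) :=
  ⟨Pc_prefix v, Pc_pal v, fun _ h1 h2 => Pc_min h1 h2⟩

theorem palClosure_unique {v p : List A} (h : IsPalClosure v p) : p = Pc v := by
  obtain ⟨hpre, hpal, hmin⟩ := h
  have hlen : p.length = (Pc v).length :=
    le_antisymm (hmin _ (Pc_prefix v) (Pc_pal v)) (Pc_min hpre hpal)
  have h2v : p.length ≤ 2 * v.length := by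
    rw [hlen, Pc_length]; have := kk_le v; omega
  have hvp := hpre.length_le
  apply List.ext_getElem hlen
  intro i h1 h2
  rcases lt_or_ge i v.length with hi | hi
  · rw [← List.IsPrefix.getElem hpre hi, ← List.IsPrefix.getElem (Pc_prefix v) hi]
  · rw [pal_getElem hpal i h1, pal_getElem (Pc_pal v) i h2]
    simp only [← hlen]
    have hlt : p.length - 1 - i < v.length := by omega
    rw [← List.IsPrefix.getElem hpre hlt, ← List.IsPrefix.getElem (Pc_prefix v) hlt]


theorem psiW_prefix {u v : List A} (h : u <+: v) : psiW a u <+: psiW a v := by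
  obtain ⟨r, rfl⟩ := h
  rw [psiW_append]
  exact ⟨_, rfl⟩

theorem psiW_take_mono {W : List A} {k k' : ℕ} (h : k ≤ k') :
    (psiW a (W.take k)).length ≤ (psiW a (W.take k')).length := by
  have : W.take k <+: W.take k' := by
    have h2 := List.take_prefix k (W.take k')
    rwa [List.take_take, min_eq_left h] at h2
  exact (psiW_prefix a this).length_le

theorem psiW_take_lt {W : List A} {k k' : ℕ}
    (h : (psiW a (W.take k')).length < (psiW a (W.take k)).length) : k' < k := by
  by_contra hc
  exact absurd (psiW_take_mono a (not_lt.mp hc)) (not_le.mpr h)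

theorem psiW_take_strict {W : List A} {k k' : ℕ} (h : k < k') (hW : k < W.length) :
    (psiW a (W.take k)).length < (psiW a (W.take k')).length := by
  have heq : W.take k' = W.take k ++ (W.take k').drop k := by
    conv_lhs => rw [← List.take_append_drop k (W.take k')]
    rw [List.take_take, min_eq_left h.le]
  have hr : (W.take k').drop k ≠ [] := by
    apply List.ne_nil_of_length_pos
    rw [List.length_drop, List.length_take]
    omega
  rw [heq, psiW_append, List.length_append]
  have := List.length_pos_iff.mpr (psiW_ne_nil a hr)
  omega

theorem psiW_cons_self (w : List A) : psiW a (a :: w) = a :: psiW a w := by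
  rw [psiW_cons]; simp

theorem psiW_cons_ne {c : A} (hc : c ≠ a) (w : List A) :
    psiW a (c :: w) = a :: c :: psiW a w := by
  rw [psiW_cons]; simp [hc]

theorem psiW_drop_of_a (W : List A) (j : ℕ) (hj : j ≤ (psiW a W).length)
    (hja : ∀ h : j < (psiW a W).length, (psiW a W)[j] = a) :
    ∃ k ≤ W.length, j = (psiW a (W.take k)).length ∧
      (psiW a W).drop j = psiW a (W.drop k) := by
  induction W generalizing j with
  | nil =>
    have hj0 : j = 0 := by simpa [psiW_nil] using hj
    subst hj0
    exact ⟨0, by simp, by simp [psiW_nil], by simp⟩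
  | cons c W ih =>
    rcases Nat.eq_zero_or_pos j with rfl | hj0
    · exact ⟨0, by simp, by simp [psiW_nil], by simp⟩
    obtain ⟨j, rfl⟩ : ∃ j', j = j' + 1 := ⟨j - 1, by omega⟩
    by_cases hc : c = a
    · subst hc
      simp only [psiW_cons_self, List.length_cons, List.getElem_cons_succ,
        Nat.add_lt_add_iff_right, Nat.add_le_add_iff_right] at hj hja
      obtain ⟨k, hk, hjk, hdrop⟩ := ih j hj hja
      refine ⟨k + 1, by simpa using hk, ?_, ?_⟩
      · rw [List.take_succ_cons, psiW_cons_self, List.length_cons, hjk]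
      · rw [psiW_cons_self, List.drop_succ_cons, List.drop_succ_cons, hdrop]
    · rcases Nat.eq_zero_or_pos j with rfl | hj0'
      · exfalso
        have hlen : 1 < (psiW a (c :: W)).length := by
          rw [psiW_cons_ne a hc]; simp
        have hval := hja hlen
        simp only [psiW_cons_ne a hc] at hval
        simp at hval
        exact hc hval
      obtain ⟨j, rfl⟩ : ∃ j', j = j' + 1 := ⟨j - 1, by omega⟩
      simp only [psiW_cons_ne a hc, List.length_cons, List.getElem_cons_succ,
        Nat.add_lt_add_iff_right, Nat.add_le_add_iff_right] at hj hja
      obtain ⟨k, hk, hjk, hdrop⟩ := ih j hj hja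
      refine ⟨k + 1, by simpa using hk, ?_, ?_⟩
      · rw [List.take_succ_cons, psiW_cons_ne a hc, List.length_cons, List.length_cons, hjk]
      · rw [psiW_cons_ne a hc, List.drop_succ_cons, List.drop_succ_cons,
          List.drop_succ_cons, hdrop]

theorem psiW_drop_of_ne (W : List A) (j : ℕ) (hj : j < (psiW a W).length)
    (hne : (psiW a W)[j] ≠ a) :
    ∃ m, ∃ hm : m < W.length, W[m] ≠ a ∧
      j = (psiW a (W.take m)).length + 1 ∧
      (psiW a W).drop j = W[m] :: psiW a (W.drop (m + 1)) := by
  induction W generalizing j with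
  | nil => simp [psiW_nil] at hj
  | cons c W ih =>
    rcases Nat.eq_zero_or_pos j with rfl | hj0
    · exfalso
      obtain ⟨r, hr⟩ := psiW_head a c W
      simp [hr] at hne
    obtain ⟨j, rfl⟩ : ∃ j', j = j' + 1 := ⟨j - 1, by omega⟩
    by_cases hc : c = a
    · subst hc
      simp only [psiW_cons_self, List.length_cons, List.getElem_cons_succ,
        Nat.add_lt_add_iff_right] at hj hne
      obtain ⟨m, hm, hma, hjm, hdropm⟩ := ih j hj hne
      refine ⟨m + 1, by simpa using hm, by simpa using hma, ?_, ?_⟩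
      · rw [List.take_succ_cons, psiW_cons_self, List.length_cons, hjm]
      · rw [psiW_cons_self, List.drop_succ_cons, hdropm]
        simp
    · rcases Nat.eq_zero_or_pos j with rfl | hj0'
      · refine ⟨0, by simp, by simpa using hc, by simp [psiW_nil], ?_⟩
        rw [psiW_cons_ne a hc]
        simp
      obtain ⟨j, rfl⟩ : ∃ j', j = j' + 1 := ⟨j - 1, by omega⟩
      simp only [psiW_cons_ne a hc, List.length_cons, List.getElem_cons_succ,
        Nat.add_lt_add_iff_right] at hj hne
      obtain ⟨m, hm, hma, hjm, hdropm⟩ := ih j hj hne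
      refine ⟨m + 1, by simpa using hm, by simpa using hma, ?_, ?_⟩
      · rw [List.take_succ_cons, psiW_cons_ne a hc, List.length_cons, List.length_cons, hjm]
      · rw [psiW_cons_ne a hc, List.drop_succ_cons, List.drop_succ_cons, hdropm]
        simp

theorem psiW_whole_mono (W : List A) (k : ℕ) (hk : k ≤ W.length) :
    (psiW a (W.take k)).length ≤ (psiW a W).length := by
  conv_rhs => rw [show W = W.take W.length by rw [List.take_length]]
  exact psiW_take_mono a hk

/-- Core lemma 1: closure commutes with ψ_a, case of appended `a`. -/
theorem pc_psiW_snoc_a (W : List A) :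
    Pc (psiW a W ++ [a]) = psiW a (Pc W) ++ [a] := by
  have hsplit : psiW a W = psiW a (W.take (kk W)) ++ psiW a (W.drop (kk W)) := by
    rw [← psiW_append, List.take_append_drop]
  have key : kk (psiW a W ++ [a]) = (psiW a (W.take (kk W))).length := by
    apply le_antisymm
    · apply kk_min
      have hdropkey : (psiW a W ++ [a]).drop (psiW a (W.take (kk W))).length
          = psiW a (W.drop (kk W)) ++ [a] := by
        conv_lhs => rw [hsplit]
        rw [List.append_assoc, List.drop_left]
      rw [hdropkey]
      exact (psiW_pal_iff a _).mpr (kk_spec W)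
    · by_contra hlt
      push_neg at hlt
      set j := kk (psiW a W ++ [a]) with hjdef
      have hjW : j < (psiW a W).length :=
        lt_of_lt_of_le hlt (psiW_whole_mono a W _ (kk_le W))
      have hpal := kk_spec (psiW a W ++ [a])
      have hD : (psiW a W ++ [a]).drop j = (psiW a W).drop j ++ [a] := by
        rw [List.drop_append, show j - (psiW a W).length = 0 by omega,
          List.drop_zero]
      rw [hD] at hpal
      -- extract first letter a
      obtain ⟨X, hX⟩ : ∃ X, (psiW a W).drop j = a :: X := by
        cases hXc : (psiW a W).drop j with
        | nil =>
          exfalso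
          have : ((psiW a W).drop j).length = 0 := by rw [hXc]; rfl
          simp at this
          omega
        | cons e X' =>
          rw [hXc] at hpal
          simp at hpal
          obtain ⟨h1, -⟩ := hpal
          exact ⟨X', by rw [← h1]⟩
      have hfst : ∀ h : j < (psiW a W).length, (psiW a W)[j] = a := by
        intro h
        have := List.drop_eq_getElem_cons h
        rw [hX] at this
        exact (List.head_eq_of_cons_eq this.symm)
      obtain ⟨k', hk', hjk', hdrop'⟩ := psiW_drop_of_a a W j (le_of_lt hjW) hfst
      rw [hdrop'] at hpal
      have hk'pal : kk W ≤ k' := kk_min ((psiW_pal_iff a _).mp hpal)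
      have : k' < kk W := psiW_take_lt a (by rw [← hjk']; exact hlt)
      omega
  rw [Pc, key]
  have htake : (psiW a W ++ [a]).take (psiW a (W.take (kk W))).length
      = psiW a (W.take (kk W)) := by
    conv_lhs => rw [hsplit, List.append_assoc]
    exact List.take_left
  rw [htake, Pc, psiW_append]
  calc (psiW a W ++ [a]) ++ (psiW a (W.take (kk W))).reverse
      = psiW a W ++ (a :: (psiW a (W.take (kk W))).reverse) := by simp
    _ = psiW a W ++ (psiW a ((W.take (kk W)).reverse) ++ [a]) := by rw [rev_psiW]
    _ = (psiW a W ++ psiW a ((W.take (kk W)).reverse)) ++ [a] := by simp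

/-- Core lemma 2: closure commutes with ψ_a, case of a word ending in `b ≠ a`. -/
theorem pc_psiW_snoc_ne (W' : List A) (b : A) (hb : b ≠ a) :
    Pc (psiW a (W' ++ [b])) = psiW a (Pc (W' ++ [b])) ++ [a] := by
  set W := W' ++ [b] with hWdef
  clear_value W
  have hWlen : W.length = W'.length + 1 := by simp [hWdef]
  have hkle : kk W ≤ W'.length := by
    apply kk_min
    have h1 : W.drop W'.length = [b] := by rw [hWdef]; exact List.drop_left
    rw [h1]
    rfl
  have hspal := kk_spec W
  obtain ⟨r, hr⟩ : ∃ r, psiW a (W.drop (kk W)) = a :: r := by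
    cases hd : W.drop (kk W) with
    | nil =>
      exfalso
      have : (W.drop (kk W)).length = 0 := by rw [hd]; rfl
      simp at this
      omega
    | cons e s' => exact psiW_head a e s'
  have hrpal : r.reverse = r := by
    have h1 := rev_psiW a (W.drop (kk W))
    rw [hspal, hr] at h1
    simpa using h1
  have hpsisplit : psiW a W = psiW a (W.take (kk W)) ++ (a :: r) := by
    rw [← hr, ← psiW_append, List.take_append_drop]
  have hlent : (psiW a (W.take (kk W))).length ≤ (psiW a W').length := by
    have h2 := psiW_take_mono a (W := W) hkle
    rwa [show W.take W'.length = W' by rw [hWdef]; exact List.take_left] at h2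
  have key : kk (psiW a W) = (psiW a (W.take (kk W))).length + 1 := by
    apply le_antisymm
    · apply kk_min
      have hdropkey : (psiW a W).drop ((psiW a (W.take (kk W))).length + 1) = r := by
        rw [hpsisplit, List.drop_append,
          List.drop_eq_nil_of_le (by omega),
          show (psiW a (W.take (kk W))).length + 1 - (psiW a (W.take (kk W))).length = 1
            from by omega]
        rfl
      rw [hdropkey]
      exact hrpal
    · by_contra hlt
      push_neg at hlt
      set j := kk (psiW a W) with hjdef
      have hjle : j ≤ (psiW a (W.take (kk W))).length := by omega
      have hjW' : j ≤ (psiW a W').length := le_trans hjle hlent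
      have hpal := kk_spec (psiW a W)
      have hWsplit2 : psiW a W = psiW a W' ++ [a, b] := by
        rw [hWdef, psiW_append, psiW_singleton, if_neg hb]
      have hD : (psiW a W).drop j = (psiW a W').drop j ++ [a, b] := by
        rw [hWsplit2, List.drop_append,
          show j - (psiW a W').length = 0 by omega, List.drop_zero]
      -- first letter of the palindromic suffix is b
      rw [hD] at hpal
      obtain ⟨X, hX⟩ : ∃ X, (psiW a W').drop j ++ [a, b] = b :: X := by
        have h2 := hpal
        rw [show ((psiW a W').drop j ++ [a, b]).reverse
            = b :: (a :: ((psiW a W').drop j).reverse) from by simp] at h2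
        exact ⟨_, h2.symm⟩
      have hjWlt : j < (psiW a W).length := by
        rw [hWsplit2, List.length_append]
        simp
        omega
      have hfst : (psiW a W)[j] = b := by
        have h3 := List.drop_eq_getElem_cons hjWlt
        rw [hD, hX] at h3
        exact (List.head_eq_of_cons_eq h3.symm)
      obtain ⟨m, hm, hma, hjm, hdropm⟩ :=
        psiW_drop_of_ne a W j hjWlt (by rw [hfst]; exact hb)
      rcases List.eq_nil_or_concat (W.drop (m + 1)) with hs' | ⟨s'', e, hs'⟩
      · -- m = W.length - 1, so j = |psiW W'| + 1, contradiction with j ≤ |psiW W'|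
        have hm1 : W.length ≤ m + 1 := by
          by_contra hcon
          push_neg at hcon
          have : (W.drop (m+1)).length = 0 := by rw [hs']; rfl
          simp at this
          omega
        have hmW' : m = W'.length := by omega
        have : j = (psiW a W').length + 1 := by
          rw [hjm, hmW', show W.take W'.length = W' by rw [hWdef]; exact List.take_left]
        omega
      · rw [List.concat_eq_append] at hs'
        have hDm : (psiW a W).drop j = W[m] :: psiW a (W.drop (m + 1)) := hdropm
        rw [hD] at hDm
        by_cases he : e = a
        · -- suffix ends with a but starts with W[m] ≠ a : contradiction with palindrome
          exfalso
          rw [hs', psiW_append, psiW_singleton, if_pos he] at hDm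
          rw [hDm] at hpal
          -- hpal : (W[m] :: (psiW a s'' ++ [a])).reverse = W[m] :: (psiW a s'' ++ [a])
          have := hpal
          rw [show (W[m] :: (psiW a s'' ++ [a])).reverse
              = a :: ((psiW a s'').reverse ++ [W[m]]) from by simp] at this
          exact hma (List.head_eq_of_cons_eq this).symm
        · rw [hs', psiW_append, psiW_singleton, if_neg he] at hDm
          rw [hDm] at hpal
          have hrev : (W[m] :: (psiW a s'' ++ [a, e])).reverse
              = e :: (a :: ((psiW a s'').reverse ++ [W[m]])) := by simp
          rw [hrev] at hpal
          have hce : e = W[m] := List.head_eq_of_cons_eq hpal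
          have htail : psiW a s'' ++ [a, e] = a :: ((psiW a s'').reverse ++ [W[m]]) :=
            (List.tail_eq_of_cons_eq hpal).symm
          rw [← hce] at htail
          have h4 : psiW a s'' ++ [a] = a :: (psiW a s'').reverse := by
            have h5 : (psiW a s'' ++ [a]) ++ [e] = (a :: (psiW a s'').reverse) ++ [e] := by
              rw [show (psiW a s'' ++ [a]) ++ [e] = psiW a s'' ++ [a, e] by simp]
              rw [htail]
              simp
            exact List.append_inj_left' h5 rfl
          rw [rev_psiW] at h4
          have hs''pal : s''.reverse = s'' := (psiW_inj a (List.append_inj_left' h4 rfl)).symm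
          -- drop m W = W[m] :: s'' ++ [W[m]] is a palindrome
          have hdm : W.drop m = W[m] :: (s'' ++ [W[m]]) := by
            rw [List.drop_eq_getElem_cons hm, hs', hce]
          have hdmpal : (W.drop m).reverse = W.drop m := by
            rw [hdm]
            simp [hs''pal]
          have h6 : kk W ≤ m := kk_min hdmpal
          have h7 : m < kk W := by
            apply psiW_take_lt a (W := W)
            omega
          omega
  -- final computation
  have htake : (psiW a W).take ((psiW a (W.take (kk W))).length + 1)
      = psiW a (W.take (kk W)) ++ [a] := by
    rw [hpsisplit, List.take_append,
      List.take_of_length_le (by omega),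
      show (psiW a (W.take (kk W))).length + 1 - (psiW a (W.take (kk W))).length = 1
        from by omega]
    rfl
  calc Pc (psiW a W)
      = psiW a W ++ ((psiW a W).take ((psiW a (W.take (kk W))).length + 1)).reverse := by
        rw [Pc, key]
    _ = psiW a W ++ (psiW a (W.take (kk W)) ++ [a]).reverse := by rw [htake]
    _ = psiW a W ++ (a :: (psiW a (W.take (kk W))).reverse) := by simp
    _ = psiW a W ++ (psiW a ((W.take (kk W)).reverse) ++ [a]) := by rw [rev_psiW]
    _ = psiW a (W ++ (W.take (kk W)).reverse) ++ [a] := by rw [psiW_append]; simp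
    _ = psiW a (Pc W) ++ [a] := by rw [Pc]

/-- iterated palindromic closure -/
def PAL : List A → List A := fun w => w.foldl (fun p c => Pc (p ++ [c])) []

theorem PAL_nil : PAL ([] : List A) = [] := rfl

theorem PAL_snoc (w : List A) (c : A) : PAL (w ++ [c]) = Pc (PAL w ++ [c]) := by
  unfold PAL
  rw [List.foldl_append]
  rfl

theorem Pc_singleton (c : A) : Pc [c] = [c] := by
  rw [Pc, kk_singleton]
  simp

theorem justin (v : List A) (b : A) : PAL (b :: v) = psiW b (PAL v) ++ [b] := by
  induction v using List.reverseRecOn with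
  | nil =>
    rw [show (b :: ([] : List A)) = [] ++ [b] from by simp, PAL_snoc, PAL_nil]
    simp [Pc_singleton, psiW_nil]
  | append_singleton v c ih =>
    rw [show b :: (v ++ [c]) = (b :: v) ++ [c] from rfl, PAL_snoc, ih, PAL_snoc]
    by_cases hc : c = b
    · subst hc
      have h1 : (psiW c (PAL v) ++ [c]) ++ [c] = psiW c (PAL v ++ [c]) ++ [c] := by
        rw [psiW_append, psiW_singleton, if_pos rfl]
      rw [h1]
      exact pc_psiW_snoc_a c (PAL v ++ [c])
    · have h1 : (psiW b (PAL v) ++ [b]) ++ [c] = psiW b (PAL v ++ [c]) := by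
        rw [psiW_append, psiW_singleton, if_neg hc]
        simp
      rw [h1]
      exact pc_psiW_snoc_ne b (PAL v) c hc

/-- iterated ψ along a word -/
def PSI : List A → List A → List A
  | [], v => v
  | b :: w, v => psiW b (PSI w v)

theorem PSI_snoc (w : List A) (b : A) (v : List A) :
    PSI (w ++ [b]) v = PSI w (psiW b v) := by
  induction w with
  | nil => rfl
  | cons c w ih =>
    have h1 : PSI ((c :: w) ++ [b]) v = psiW c (PSI (w ++ [b]) v) := rfl
    rw [h1, ih]
    rfl

theorem PAL_snoc_eq (w : List A) (c : A) :
    PAL (w ++ [c]) = PSI w [c] ++ PAL w := by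
  induction w with
  | nil =>
    rw [List.nil_append, show PSI [] [c] = [c] from rfl, PAL_nil,
      show ([c] : List A) = [] ++ [c] from by simp, PAL_snoc, PAL_nil]
    simp [Pc_singleton]
  | cons b w ih =>
    rw [show b :: w ++ [c] = b :: (w ++ [c]) from rfl, justin, ih, psiW_append, justin]
    show _ = psiW b (PSI w [c]) ++ (psiW b (PAL w) ++ [b])
    simp

theorem muW_eq_PSI (x : ℕ → A) (n : ℕ) (v : List A) :
    muW x n v = PSI ((List.range' 1 n).map x) v := by
  induction n generalizing v with
  | zero => rfl
  | succ n ih =>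
    show muW x n (psiW (x (n + 1)) v) = _
    rw [ih, ← PSI_snoc]
    congr 1
    rw [List.range'_concat, List.map_append]
    simp [Nat.add_comm]

theorem flatten_replicate_reverse (n : ℕ) (h : List A) :
    (List.replicate n h).flatten.reverse = (List.replicate n h.reverse).flatten := by
  induction n with
  | zero => simp
  | succ n ih =>
    rw [List.replicate_succ, List.flatten_cons, List.reverse_append, ih,
      List.replicate_succ', List.flatten_append]
    simp

end PalAux

theorem u_g_prod (x : ℕ → A) (u : ℕ → List A) (hu1 : u 1 = [])
    (hu : ∀ n : ℕ, 1 ≤ n → IsPalClosure (u n ++ [x n]) (u (n + 1))) (y : ℕ → A) (d : ℕ → ℕ) (g : ℕ → ℕ)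
    (hy : ∀ m : ℕ, 1 ≤ m → y m ≠ y (m + 1)) (hd : ∀ m : ℕ, 1 ≤ m → 0 < d m)
    (hg : ∀ m : ℕ, g m = (∑ i ∈ Finset.Icc 1 (m - 1), d i) + 1)
    (hx : ∀ m : ℕ, 1 ≤ m → ∀ n : ℕ, g m ≤ n → n < g (m + 1) → x n = y m) :
    ∀ m : ℕ, 1 ≤ m →
      u (g (m + 1)) =
        ((List.range' 1 m).reverse.map
          (fun i => (List.replicate (d i) (hW x (g i - 1))).flatten)).flatten ∧
      u (g (m + 1)) =
        ((List.range' 1 m).map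
          (fun i => (List.replicate (d i) (hW x (g i - 1)).reverse).flatten)).flatten := by
  open PalAux in
  -- basic facts about g
  have hg1 : g 1 = 1 := by rw [hg]; simp
  have hgpos : ∀ m, 1 ≤ g m := by intro m; rw [hg]; omega
  have hgsucc : ∀ m, 1 ≤ m → g (m + 1) = g m + d m := by
    intro m hm
    have h2 : ∑ i ∈ Finset.Icc 1 m, d i = (∑ i ∈ Finset.Icc 1 (m - 1), d i) + d m := by
      conv_lhs => rw [show m = (m - 1) + 1 by omega]
      rw [Finset.sum_Icc_succ_top (by omega), show (m - 1) + 1 = m by omega]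
    rw [hg, hg]
    simp only [Nat.add_sub_cancel]
    omega
  -- u in terms of iterated palindromic closure
  have hran : ∀ n, 1 ≤ n →
      (List.range' 1 n).map x = (List.range' 1 (n - 1)).map x ++ [x n] := by
    intro n hn
    conv_lhs => rw [show n = (n - 1) + 1 by omega]
    rw [List.range'_concat, List.map_append]
    simp only [List.map_cons, List.map_nil]
    rw [show 1 + 1 * (n - 1) = n by omega]
  have hUeq : ∀ n, 1 ≤ n → u n = PAL ((List.range' 1 (n - 1)).map x) := by
    intro n hn
    induction n with
    | zero => omega
    | succ n ih =>
      rcases Nat.eq_zero_or_pos n with rfl | hn0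
      · simpa [PAL_nil] using hu1
      · rw [palClosure_unique (hu n hn0), ih hn0, ← PAL_snoc]
        simp only [Nat.add_sub_cancel]
        rw [← hran n hn0]
  have hrec : ∀ n, 1 ≤ n → u (n + 1) = hW x (n - 1) ++ u n := by
    intro n hn
    rw [hUeq (n + 1) (by omega), hUeq n hn]
    simp only [Nat.add_sub_cancel]
    rw [hran n hn, PAL_snoc_eq]
    congr 1
    rw [hW, muW_eq_PSI, show (n - 1) + 1 = n by omega]
  -- h is constant on runs
  have hWconst : ∀ n, x (n + 2) = x (n + 1) → hW x (n + 1) = hW x n := by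
    intro n h
    show muW x n (psiW (x (n + 1)) [x (n + 2)]) = muW x n [x (n + 1)]
    rw [h, psiW_singleton, if_pos rfl]
  have hWrun : ∀ m, 1 ≤ m → ∀ j, j < d m → hW x (g m - 1 + j) = hW x (g m - 1) := by
    intro m hm j
    induction j with
    | zero => simp
    | succ j ih =>
      intro hj
      have hgm := hgpos m
      have h1 : hW x (g m - 1 + j + 1) = hW x (g m - 1 + j) := by
        apply hWconst
        rw [show g m - 1 + j + 2 = g m + (j + 1) by omega,
          show g m - 1 + j + 1 = g m + j by omega]
        rw [hx m hm (g m + (j + 1)) (by omega) (by rw [hgsucc m hm]; omega),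
          hx m hm (g m + j) (by omega) (by rw [hgsucc m hm]; omega)]
      rw [show g m - 1 + (j + 1) = g m - 1 + j + 1 from rfl, h1, ih (by omega)]
  -- product over one run
  have hinner : ∀ m, 1 ≤ m → ∀ j, j ≤ d m →
      u (g m + j) = (List.replicate j (hW x (g m - 1))).flatten ++ u (g m) := by
    intro m hm j
    induction j with
    | zero => simp
    | succ j ih =>
      intro hj
      have hgm := hgpos m
      have h1 : u (g m + j + 1) = hW x (g m + j - 1) ++ u (g m + j) :=
        hrec (g m + j) (by omega)
      rw [show g m + (j + 1) = g m + j + 1 from rfl, h1, ih (by omega),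
        show g m + j - 1 = g m - 1 + j by omega, hWrun m hm j (by omega),
        List.replicate_succ, List.flatten_cons, List.append_assoc]
  -- the first product formula
  have houter : ∀ m, 1 ≤ m → u (g (m + 1)) =
      ((List.range' 1 m).reverse.map
        (fun i => (List.replicate (d i) (hW x (g i - 1))).flatten)).flatten := by
    intro m hm
    induction m with
    | zero => omega
    | succ m ih =>
      rcases Nat.eq_zero_or_pos m with rfl | hm0
      · rw [hgsucc 1 le_rfl, hinner 1 le_rfl (d 1) le_rfl, hg1, hu1]
        simp [hg1]
      · rw [hgsucc (m + 1) (by omega), hinner (m + 1) (by omega) (d (m + 1)) le_rfl, ih hm0]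
        rw [List.range'_concat, List.reverse_append, List.map_append, List.flatten_append]
        simp only [List.reverse_cons, List.reverse_nil, List.nil_append, List.map_cons,
          List.map_nil, List.flatten_cons, List.flatten_nil, List.append_nil]
        rw [show 1 + 1 * m = m + 1 by omega]
  -- u (g (m+1)) is a palindrome
  have hupal : ∀ m, 1 ≤ m → (u (g (m + 1))).reverse = u (g (m + 1)) := by
    intro m hm
    have h2 : 2 ≤ g (m + 1) := by
      rw [hgsucc m hm]
      have := hgpos m
      have := hd m hm
      omega
    have h3 := (hu (g (m + 1) - 1) (by omega)).2.1
    rwa [show g (m + 1) - 1 + 1 = g (m + 1) by omega] at h3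
  -- reversal of the product
  have hrevprod : ∀ l : List ℕ,
      (((l.reverse.map (fun i => (List.replicate (d i) (hW x (g i - 1))).flatten)).flatten).reverse)
      = (l.map (fun i => (List.replicate (d i) (hW x (g i - 1)).reverse).flatten)).flatten := by
    intro l
    induction l with
    | nil => simp
    | cons i l ih =>
      rw [List.reverse_cons, List.map_append, List.flatten_append, List.reverse_append, ih]
      simp only [List.map_cons, List.map_nil, List.flatten_cons, List.flatten_nil,
        List.append_nil, List.map_cons, List.flatten_cons]
      rw [flatten_replicate_reverse]
  intro m hm
  refine ⟨houter m hm, ?_⟩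
  rw [← hupal m hm, houter m hm, hrevprod]
end

section
/- Let s be the standard episturmian word with directive word Δ(s) = y_1^{d_1} y_2^{d_2} ⋯ (y_i ≠ y_{i+1}, d_i > 0). Then the Ziv-Lempel factorization of s is z(s) = (z_1, z_2, …) with z_1 = y_1 and z_k = y_{k-1}^{-1} (\bar{h_{g(k-1)-1}})^{d_{k-1}} y_k for k ≥ 2, i.e., z_k is obtained from (\bar{h_{g(k-1)-1}})^{d_{k-1}} by removing its first letter y_{k-1} and appending y_k. -/
set_option linter.unusedSectionVars false
set_option maxHeartbeats 1600000

variable {A : Type*} [DecidableEq A]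

namespace ZL



theorem psiW_append (a : A) (v w : List A) : psiW a (v ++ w) = psiW a v ++ psiW a w := by
  simp [psiW]

theorem muW_zero (x : ℕ → A) (w : List A) : muW x 0 w = w := rfl

theorem muW_succ (x : ℕ → A) (n : ℕ) (w : List A) :
    muW x (n+1) w = muW x n (psiW (x (n+1)) w) := rfl

theorem muW_append (x : ℕ → A) (n : ℕ) (v w : List A) :
    muW x n (v ++ w) = muW x n v ++ muW x n w := by
  induction n generalizing v w with
  | zero => rfl
  | succ n ih => rw [muW_succ, psiW_append, ih, muW_succ, muW_succ]

theorem muW_ne_nil (x : ℕ → A) (n : ℕ) (c : A) : muW x n [c] ≠ [] := by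
  induction n generalizing c with
  | zero => simp [muW_zero]
  | succ n ih =>
    rw [muW_succ]
    by_cases h : c = x (n+1)
    · simpa [psiW, h] using ih (x (n+1))
    · have : psiW (x (n+1)) [c] = [x (n+1)] ++ [c] := by simp [psiW, h]
      rw [this, muW_append]
      simp [ih c]

/-- ends-with form -/
theorem muW_eq_concat (x : ℕ → A) (n : ℕ) (c : A) :
    ∃ M', muW x n [c] = M' ++ [c] := by
  induction n generalizing c with
  | zero => exact ⟨[], rfl⟩
  | succ n ih =>
    by_cases hc : c = x (n+1)
    · have e : muW x (n+1) [c] = muW x n [c] := by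
        rw [muW_succ]; congr 1; simp [psiW, hc]
      rw [e]; exact ih c
    · have e : muW x (n+1) [c] = muW x n [x (n+1)] ++ muW x n [c] := by
        rw [muW_succ]
        have : psiW (x (n+1)) [c] = [x (n+1)] ++ [c] := by simp [psiW, hc]
        rw [this, muW_append]
      obtain ⟨M', hM⟩ := ih c
      exact ⟨muW x n [x (n+1)] ++ M', by rw [e, hM, List.append_assoc]⟩

theorem hW_def' (x : ℕ → A) (n : ℕ) : hW x n = muW x n [x (n+1)] := rfl

theorem hW_const (x : ℕ → A) (n : ℕ) (hn : 1 ≤ n) (hxx : x (n+1) = x n) :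
    hW x n = hW x (n-1) := by
  obtain ⟨m, rfl⟩ := Nat.exists_eq_add_of_le hn
  have : hW x (1+m) = muW x m (psiW (x (m+1)) [x (m+1+1)]) := by
    rw [hW, show 1+m = m+1 by omega, muW_succ]
  rw [this]
  have hx2 : x (m+1+1) = x (m+1) := by rw [show m+1+1 = 1+m+1 by omega, hxx]; congr 1; omega
  rw [hx2]
  simp only [psiW, List.flatMap_cons, List.flatMap_nil, List.append_nil, if_pos]
  rw [show 1+m-1 = m by omega, hW]

theorem muW_succ_of_ne (x : ℕ → A) (n : ℕ) (c : A) (hc : c ≠ x (n+1)) :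
    muW x (n+1) [c] = hW x n ++ muW x n [c] := by
  rw [muW_succ]
  have : psiW (x (n+1)) [c] = [x (n+1)] ++ [c] := by simp [psiW, hc]
  rw [this, muW_append, hW]

theorem muW_succ_of_eq (x : ℕ → A) (n : ℕ) (c : A) (hc : c = x (n+1)) :
    muW x (n+1) [c] = muW x n [c] := by
  rw [muW_succ]; congr 1; simp [psiW, hc]



theorem pal_getElem {r : List A} (h : r.reverse = r) (i : ℕ) (hi : i < r.length) :
    r[i] = r[r.length - 1 - i]'(by omega) := by
  rw [List.getElem_of_eq h.symm hi, List.getElem_reverse]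


theorem getElem_idx_congr (l : List A) (a b : ℕ) (hab : a = b) (ha : a < l.length) :
    l[a] = l[b]'(hab ▸ ha) := by subst hab; rfl

theorem palClosure_unique {w p q : List A} (hp : IsPalClosure w p) (hq : IsPalClosure w q) :
    p = q := by
  obtain ⟨hp1, hp2, hp3⟩ := hp
  obtain ⟨hq1, hq2, hq3⟩ := hq
  have hwpal : (w ++ w.reverse).reverse = w ++ w.reverse := by simp
  have hwpre : w <+: w ++ w.reverse := List.prefix_append _ _
  have hplen : p.length ≤ 2 * w.length := by
    have := hp3 (w ++ w.reverse) hwpre hwpal; simpa [two_mul] using this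
  have hlen : p.length = q.length := le_antisymm (hp3 q hq1 hq2) (hq3 p hp1 hp2)
  have hwp : w.length ≤ p.length := hp1.length_le
  apply List.ext_getElem hlen
  intro i h1 h2
  by_cases hlt : i < w.length
  · rw [← List.IsPrefix.getElem hp1 hlt, ← List.IsPrefix.getElem hq1 hlt]
  · push_neg at hlt
    have hb : p.length - 1 - i < w.length := by omega
    have hb' : q.length - 1 - i < w.length := by omega
    rw [pal_getElem hp2 i h1, pal_getElem hq2 i h2,
      ← List.IsPrefix.getElem hp1 hb, ← List.IsPrefix.getElem hq1 hb']
    congr 2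
    omega



variable (x : ℕ → A) (u : ℕ → List A)

section structure_lemmas

variable (hu1 : u 1 = []) (hu : ∀ n : ℕ, 1 ≤ n → IsPalClosure (u n ++ [x n]) (u (n + 1)))

include hu1 hu

theorem u_cons_prefix (n : ℕ) (hn : 1 ≤ n) : u n ++ [x n] <+: u (n+1) := (hu n hn).1

theorem u_step_prefix (n : ℕ) (hn : 1 ≤ n) : u n <+: u (n+1) :=
  ((u n).prefix_append [x n]).trans (hu n hn).1

theorem u_mono (m n : ℕ) (hm : 1 ≤ m) (hmn : m ≤ n) : u m <+: u n := by
  induction n with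
  | zero => omega
  | succ k ih =>
    rcases Nat.lt_or_ge m (k+1) with h | h
    · exact (ih (by omega)).trans (u_step_prefix x u hu1 hu k (by omega))
    · have : m = k + 1 := by omega
      subst this; exact List.prefix_rfl

theorem u_len_mono (m n : ℕ) (hm : 1 ≤ m) (hmn : m ≤ n) : (u m).length ≤ (u n).length :=
  (u_mono x u hu1 hu m n hm hmn).length_le

theorem u_len_strict (n : ℕ) (hn : 1 ≤ n) : (u n).length + 1 ≤ (u (n+1)).length := by
  have := (u_cons_prefix x u hu1 hu n hn).length_le
  simpa using this

theorem u_pal (n : ℕ) (hn : 1 ≤ n) : (u n).reverse = u n := by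
  rcases Nat.lt_or_ge n 2 with h | h
  · have : n = 1 := by omega
    subst this; rw [hu1]; rfl
  · obtain ⟨m, rfl⟩ : ∃ m, n = m + 1 := ⟨n - 1, by omega⟩
    exact (hu m (by omega)).2.1

/-- the letter at position `(u j).length` in `u n` is `x j`, for `1 ≤ j < n`. -/
theorem u_letter_at (j n : ℕ) (hj : 1 ≤ j) (hjn : j + 1 ≤ n) :
    u j ++ [x j] <+: u n :=
  (u_cons_prefix x u hu1 hu j hj).trans (u_mono x u hu1 hu (j+1) n (by omega) hjn)

/-- Lemma P: palindromic prefixes of `u n` are exactly the `u j`. -/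
theorem pal_prefix_classify (n : ℕ) (hn : 1 ≤ n) :
    ∀ P : List A, P.reverse = P → P <+: u n → ∃ j, 1 ≤ j ∧ j ≤ n ∧ P = u j := by
  induction n with
  | zero => omega
  | succ k ih =>
    intro P hPal hPre
    rcases Nat.lt_or_ge k 1 with hk | hk
    · have hk0 : k = 0 := by omega
      subst hk0
      refine ⟨1, le_refl _, le_refl _, ?_⟩
      rw [hu1] at hPre ⊢
      simpa using hPre
    · by_cases hlen : P.length ≤ (u k).length
      · have : P <+: u k :=
          List.prefix_of_prefix_length_le hPre (u_mono x u hu1 hu k (k+1) hk (by omega)) hlen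
        obtain ⟨j, h1, h2, h3⟩ := ih hk P hPal this
        exact ⟨j, h1, by omega, h3⟩
      · push_neg at hlen
        have hc : u k ++ [x k] <+: P := by
          refine List.prefix_of_prefix_length_le (u_cons_prefix x u hu1 hu k hk) hPre ?_
          simp; omega
        have := (hu k hk).2.2 P hc hPal
        exact ⟨k+1, by omega, le_refl _, hPre.eq_of_length_le this⟩


theorem u_growth (n : ℕ) (hn : 1 ≤ n) : (u (n+1)).length ≤ 2 * (u n).length + 1 := by
  have h := (hu n hn).2.2 (u n ++ [x n] ++ (u n).reverse)
    (List.prefix_append _ _) (by simp)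
  simp at h
  omega

end structure_lemmas

section seg
omit [DecidableEq A] in
theorem seg_reverse (q : List A) (a lam : ℕ) (h : a + lam ≤ q.length) :
    ((q.drop a).take lam).reverse = (q.reverse.drop (q.length - a - lam)).take lam := by
  have hw : (q.take (a+lam)).length = a + lam := by
    simp [List.length_take]; omega
  have h2 : (q.take (a+lam)).drop a = (q.drop a).take lam := by
    rw [List.drop_take]; congr 1; omega
  calc ((q.drop a).take lam).reverse
      = ((q.take (a+lam)).drop a).reverse := by rw [h2]
    _ = (q.take (a+lam)).reverse.take ((q.take (a+lam)).length - a) := by rw [List.reverse_drop]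
    _ = (q.take (a+lam)).reverse.take lam := by rw [hw]; congr 1; omega
    _ = (q.reverse.drop (q.length - (a+lam))).take lam := by rw [List.reverse_take]
    _ = (q.reverse.drop (q.length - a - lam)).take lam := by congr 2; omega

end seg

section master

variable (hu1 : u 1 = []) (hu : ∀ n : ℕ, 1 ≤ n → IsPalClosure (u n ++ [x n]) (u (n + 1)))

include hu1 hu

theorem R_lemma (n : ℕ) (hA : ∀ m, 1 ≤ m → m ≤ n → u (m+1) = hW x (m-1) ++ u m) :
    ∀ m, m ≤ n → ∀ c, muW x m [c] ++ u (m+1) = u (m+1) ++ (muW x m [c]).reverse := by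
  intro m
  induction m with
  | zero => intro _ c; rw [muW_zero, hu1]; rfl
  | succ m ih =>
    intro hm c
    have hA' : u (m+1+1) = hW x m ++ u (m+1) := by
      have := hA (m+1) (by omega) hm; simpa using this
    by_cases hc : c = x (m+1)
    · rw [muW_succ_of_eq x m c hc, hc]
      show hW x m ++ u (m+2) = u (m+2) ++ (hW x m).reverse
      have h1 : hW x m ++ u (m+1) = u (m+1) ++ (hW x m).reverse := ih (by omega) (x (m+1))
      rw [hA', List.append_assoc, h1, ← List.append_assoc]
    · rw [muW_succ_of_ne x m c hc]
      have h1 : hW x m ++ u (m+1) = u (m+1) ++ (hW x m).reverse := ih (by omega) (x (m+1))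
      have h2 : muW x m [c] ++ u (m+1) = u (m+1) ++ (muW x m [c]).reverse := ih (by omega) c
      rw [List.reverse_append, hA']
      calc (hW x m ++ muW x m [c]) ++ (hW x m ++ u (m+1))
          = hW x m ++ (muW x m [c] ++ (hW x m ++ u (m+1))) := by simp [List.append_assoc]
        _ = hW x m ++ (muW x m [c] ++ (u (m+1) ++ (hW x m).reverse)) := by rw [h1]
        _ = hW x m ++ ((muW x m [c] ++ u (m+1)) ++ (hW x m).reverse) := by simp [List.append_assoc]
        _ = hW x m ++ ((u (m+1) ++ (muW x m [c]).reverse) ++ (hW x m).reverse) := by rw [h2]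
        _ = (hW x m ++ u (m+1)) ++ ((muW x m [c]).reverse ++ (hW x m).reverse) := by
              simp [List.append_assoc]

theorem bound_lemma (n : ℕ) (hA : ∀ m, 1 ≤ m → m ≤ n → u (m+1) = hW x (m-1) ++ u m) :
    ∀ m, m ≤ n → ∀ c, (muW x m [c]).length ≤ (u (m+1)).length + 1 := by
  intro m
  induction m with
  | zero => intro _ c; rw [muW_zero]; simp
  | succ m ih =>
    intro hm c
    have hA' : u (m+1+1) = hW x m ++ u (m+1) := by
      have := hA (m+1) (by omega) hm; simpa using this
    have hlen : (u (m+1+1)).length = (hW x m).length + (u (m+1)).length := by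
      rw [hA']; simp
    by_cases hc : c = x (m+1)
    · rw [muW_succ_of_eq x m c hc]
      have := ih (by omega) c
      omega
    · rw [muW_succ_of_ne x m c hc]
      have := ih (by omega) c
      simp only [List.length_append]
      omega

theorem L2_lemma (n : ℕ) (hA : ∀ m, 1 ≤ m → m ≤ n → u (m+1) = hW x (m-1) ++ u m) :
    ∀ m, m ≤ n → ∀ j, 1 ≤ j → j ≤ m →
      (muW x m [x j]).length + (u j).length ≤ (u (m+1)).length := by
  intro m
  induction m with
  | zero => omega
  | succ m ih =>
    intro hm j hj1 hj2
    have hA' : u (m+1+1) = hW x m ++ u (m+1) := by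
      have := hA (m+1) (by omega) hm; simpa using this
    have hlen : (u (m+1+1)).length = (hW x m).length + (u (m+1)).length := by
      rw [hA']; simp
    have hjm : (u j).length ≤ (u (m+1)).length :=
      u_len_mono x u hu1 hu j (m+1) hj1 (by omega)
    by_cases hc : x j = x (m+1)
    · rw [muW_succ_of_eq x m (x j) hc, hc]
      show (hW x m).length + _ ≤ _
      omega
    · have hjm2 : j ≤ m := by
        rcases Nat.lt_or_ge j (m+1) with h | h
        · omega
        · exfalso; exact hc (by rw [show j = m+1 by omega])
      rw [muW_succ_of_ne x m (x j) hc]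
      have := ih (by omega) j hj1 hjm2
      simp only [List.length_append]
      omega


theorem phi (n : ℕ) (hA : ∀ m, 1 ≤ m → m ≤ n → u (m+1) = hW x (m-1) ++ u m) (c : A) :
    IsPalClosure (u (n+1) ++ [c]) (muW x n [c] ++ u (n+1)) := by
  rcases Nat.eq_zero_or_pos n with rfl | hn
  · rw [muW_zero, hu1]
    refine ⟨by simp, by simp, fun q hq _ => by simpa using hq.length_le⟩
  set M := muW x n [c] with hMdef
  have hR : M ++ u (n+1) = u (n+1) ++ M.reverse :=
    R_lemma x u hu1 hu n hA n le_rfl c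
  have hupal : (u (n+1)).reverse = u (n+1) := u_pal x u hu1 hu (n+1) (by omega)
  obtain ⟨M', hM'⟩ := muW_eq_concat x n c
  rw [← hMdef] at hM'
  have hpre : u (n+1) ++ [c] <+: M ++ u (n+1) := by
    rw [hR, hM']
    have : (M' ++ [c]).reverse = [c] ++ M'.reverse := by simp
    rw [this, ← List.append_assoc]
    exact List.prefix_append _ _
  have hpal : (M ++ u (n+1)).reverse = M ++ u (n+1) := by
    rw [List.reverse_append, hupal, ← hR]
  refine ⟨hpre, hpal, ?_⟩
  intro q hq hqpal
  by_contra hcon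
  push_neg at hcon
  set N1 := (u (n+1)).length with hN1
  have hMub : M.length ≤ N1 + 1 := bound_lemma x u hu1 hu n hA n le_rfl c
  have hqlb : N1 + 1 ≤ q.length := by
    have := hq.length_le; simpa [hN1] using this
  have hqub : q.length < M.length + N1 := by
    simpa [hN1] using hcon
  set Lq := q.length with hLq
  set lam := 2*N1 + 2 - Lq with hlam
  have hlam2 : 2 ≤ lam := by omega
  have hlamN : lam ≤ N1 + 1 := by omega
  set a := Lq - (N1+1) with ha
  have hrevp1 : (u (n+1) ++ [c]).reverse = [c] ++ u (n+1) := by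
    rw [List.reverse_append, hupal]; rfl
  have hsuf : [c] ++ u (n+1) <:+ q := by
    rw [← hrevp1, ← hqpal]
    exact hq.reverse
  set S := List.take lam ([c] ++ u (n+1)) with hSdef
  have hdropq : q.drop a = [c] ++ u (n+1) := by
    obtain ⟨w1, hw1⟩ := hsuf
    have hlw1 : w1.length = a := by
      have := congrArg List.length hw1
      simp at this
      omega
    rw [← hw1, List.drop_left' hlw1]
  have hSseg : S = List.take lam (q.drop a) := by rw [hdropq]
  have htk : q.take (N1+1) = u (n+1) ++ [c] := by
    have h1 : u (n+1) ++ [c] = q.take (u (n+1) ++ [c]).length := List.prefix_iff_eq_take.mp hq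
    rw [h1]; congr 1; simp [hN1]
  have hSsuf : S <:+ u (n+1) ++ [c] := by
    have h2 : (u (n+1) ++ [c]).drop a = S := by
      rw [← htk, List.drop_take]
      rw [hSseg]
      congr 1
      omega
    rw [← h2]
    exact List.drop_suffix _ _
  have hSpal : S.reverse = S := by
    rw [hSseg]
    rw [seg_reverse q a lam (by omega), hqpal]
    congr 2
    omega
  set K := List.take (lam - 1) (u (n+1)) with hKdef
  have hScons : S = [c] ++ K := by
    obtain ⟨lam', hlam'⟩ : ∃ lam', lam = lam' + 1 := ⟨lam - 1, by omega⟩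
    rw [hSdef, hKdef, hlam']
    simp [List.take_succ_cons]
  have hKlen : K.length = lam - 1 := by
    simp [hKdef]
    omega
  have hSne : S ≠ [] := by rw [hScons]; simp
  obtain ⟨S0, hS0⟩ : ∃ S0, S = S0 ++ [c] := by
    obtain ⟨t, ht⟩ := hSsuf
    rcases List.eq_nil_or_concat S with h | ⟨S0, e, hS0⟩
    · contradiction
    · rw [List.concat_eq_append] at hS0
      rw [hS0] at ht
      have h3 : (t ++ S0) ++ [e] = u (n+1) ++ [c] := by rw [← ht]; simp
      have he : e = c := by
        have h4 := congrArg List.getLast? h3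
        simpa using h4
      exact ⟨S0, by rw [hS0, he]⟩
  set P := List.take (lam - 2) (u (n+1)) with hPdef
  have hS0len : S0.length = lam - 1 := by
    have h5 := congrArg List.length hS0
    have hSlen : S.length = lam := by
      rw [hScons]; simp [hKlen]; omega
    simp [hSlen] at h5
    omega
  have hKdl : K.dropLast = P := by
    rw [List.dropLast_eq_take, hKlen, hKdef, hPdef, List.take_take]
    congr 1
    omega
  have h6 : K = S0.drop 1 ++ [c] := by
    have h7 : K = S.drop 1 := by rw [hScons]; rfl
    rw [h7, hS0, List.drop_append_of_le_length (by omega)]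
  have hKc : K = P ++ [c] := by
    have h8 : K.dropLast = S0.drop 1 := by rw [h6]; simp
    rw [h6, ← h8, hKdl]
  have hPpal : P.reverse = P := by
    have hSform : S = [c] ++ (P ++ [c]) := by rw [hScons, hKc]
    have h9 : S.reverse = [c] ++ (P.reverse ++ [c]) := by rw [hSform]; simp
    have h10 : [c] ++ (P.reverse ++ [c]) = [c] ++ (P ++ [c]) :=
      h9.symm.trans (hSpal.trans hSform)
    exact List.append_cancel_right (List.append_cancel_left h10)
  have hPpre : P <+: u (n+1) := List.take_prefix _ _
  obtain ⟨j, hj1, hj2, hj3⟩ := pal_prefix_classify x u hu1 hu (n+1) (by omega) P hPpal hPpre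
  have hPlen : P.length = lam - 2 := by
    simp [hPdef]
    omega
  have hjn : j ≤ n := by
    by_contra hcj
    push_neg at hcj
    have hj : j = n + 1 := by omega
    subst hj
    rw [hj3] at hPlen
    omega
  have hujlen : (u j).length = lam - 2 := by rw [← hj3]; exact hPlen
  have hcx : c = x j := by
    have h1 : u j ++ [x j] <+: u (n+1) := u_letter_at x u hu1 hu j (n+1) hj1 (by omega)
    have h2 : K <+: u (n+1) := List.take_prefix _ _
    have hKlen' : K.length = (u j).length + 1 := by omega
    have h5 : K = u j ++ [x j] := by
      refine (List.prefix_of_prefix_length_le h2 h1 (by simp [hKlen'])).eq_of_length_le ?_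
      simp [hKlen']
    rw [hKc, hj3] at h5
    simpa using h5
  have hL2 := L2_lemma x u hu1 hu n hA n le_rfl j hj1 hjn
  rw [← hcx] at hL2
  rw [← hMdef] at hL2
  omega

theorem A_all : ∀ n, 1 ≤ n → u (n+1) = hW x (n-1) ++ u n := by
  intro n
  induction n using Nat.strong_induction_on with
  | _ n IH =>
    intro hn
    have hA : ∀ m, 1 ≤ m → m ≤ n - 1 → u (m+1) = hW x (m-1) ++ u m :=
      fun m h1 h2 => IH m (by omega) h1
    have hphi := phi x u hu1 hu (n-1) hA (x n)
    rw [show n - 1 + 1 = n by omega] at hphi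
    have heq := palClosure_unique (hu n hn) hphi
    have hhw : hW x (n-1) = muW x (n-1) [x n] := by
      rw [hW, show n - 1 + 1 = n by omega]
    rw [heq, hhw]

end master




/-- repeated word -/
def rep (n : ℕ) (H : List A) : List A := (List.replicate n H).flatten

theorem rep_zero (H : List A) : rep 0 H = [] := rfl

theorem rep_succ (n : ℕ) (H : List A) : rep (n+1) H = H ++ rep n H := by
  simp [rep, List.replicate_succ]

theorem rep_concat (n : ℕ) (H : List A) : rep (n+1) H = rep n H ++ H := by
  induction n with
  | zero => simp [rep_succ, rep_zero]
  | succ n ih => rw [rep_succ (n+1), ih, ← List.append_assoc, ← rep_succ, ih]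

theorem rep_comm (n : ℕ) (H : List A) : H ++ rep n H = rep n H ++ H := by
  rw [← rep_succ, rep_concat]

theorem rep_length (n : ℕ) (H : List A) : (rep n H).length = n * H.length := by
  induction n with
  | zero => simp [rep_zero]
  | succ n ih => rw [rep_succ]; simp [ih]; ring

theorem rep_reverse (n : ℕ) (H : List A) : (rep n H).reverse = rep n H.reverse := by
  induction n with
  | zero => simp [rep_zero]
  | succ n ih => rw [rep_concat, List.reverse_append, ih, rep_succ]

theorem periodic_of_prefix (H v : List A) (hH : 0 < H.length) (h : v <+: H ++ v) :
    ∀ r (hr : r < v.length), v[r] = H[r % H.length]'(Nat.mod_lt _ hH) := by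
  intro r
  induction r using Nat.strong_induction_on with
  | _ r IH =>
    intro hr
    have hget : v[r] = (H ++ v)[r]'(by simp; omega) := List.IsPrefix.getElem h _
    rcases Nat.lt_or_ge r H.length with hlt | hge
    · rw [hget, List.getElem_append_left hlt]
      congr 1
      exact (Nat.mod_eq_of_lt hlt).symm
    · obtain ⟨k, rfl⟩ : ∃ k, r = H.length + k := ⟨r - H.length, by omega⟩
      have h2 : v[H.length + k] = v[k]'(by omega) := by
        rw [hget, List.getElem_append_right hge]
        congr 1
        omega
      rw [h2, IH k (by omega) (by omega)]
      congr 1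
      exact (Nat.add_mod_left _ _).symm

theorem two_le_length_of_two_mem {l : List ℕ} {a b : ℕ} (ha : a ∈ l) (hb : b ∈ l)
    (hab : a ≠ b) : 2 ≤ l.length := by
  obtain ⟨s, t, rfl⟩ := List.append_of_mem ha
  have hb' : b ∈ s ++ t := by
    rcases List.mem_append.mp hb with h | h
    · exact List.mem_append.mpr (Or.inl h)
    · rcases List.mem_cons.mp h with h | h
      · exact absurd h.symm hab
      · exact List.mem_append.mpr (Or.inr h)
  have := List.length_pos_of_mem hb'
  simp at this ⊢
  omega



theorem chain_lemma (h c : ℕ) (f : ℕ → A) (hh : 0 < h) (hc1 : 1 ≤ c) (hc2 : c < h)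
    (hmod : ∀ t, f t = f (t % h)) (hstep : ∀ r, r + 2 ≤ h → f r = f (r + c)) :
    f (c - 1) = f (h - 1) := by
  have hgd : 0 < Nat.gcd c h := Nat.gcd_pos_of_pos_left _ hc1
  have hex : ∃ jj, (c - 1 + jj * c) % h = h - 1 := by
    refine ⟨h / Nat.gcd c h - 1, ?_⟩
    have h1 : Nat.gcd c h ∣ c := Nat.gcd_dvd_left _ _
    have h2 : Nat.gcd c h ∣ h := Nat.gcd_dvd_right _ _
    have hK : 1 ≤ h / Nat.gcd c h := by
      have : Nat.gcd c h ≤ h := Nat.le_of_dvd (by omega) h2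
      exact Nat.one_le_div_iff hgd |>.mpr this
    have hck : c * (h / Nat.gcd c h) = (c / Nat.gcd c h) * h := by
      calc c * (h / Nat.gcd c h)
          = (c / Nat.gcd c h) * Nat.gcd c h * (h / Nat.gcd c h) := by
            rw [Nat.div_mul_cancel h1]
        _ = (c / Nat.gcd c h) * (Nat.gcd c h * (h / Nat.gcd c h)) := by ring
        _ = (c / Nat.gcd c h) * h := by rw [Nat.mul_div_cancel' h2]
    have hcdg : 1 ≤ c / Nat.gcd c h := by
      have : Nat.gcd c h ≤ c := Nat.le_of_dvd (by omega) h1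
      exact Nat.one_le_div_iff hgd |>.mpr this
    have he : c - 1 + (h / Nat.gcd c h - 1) * c = (c / Nat.gcd c h - 1) * h + (h - 1) := by
      have e1 : c - 1 + (h / Nat.gcd c h - 1) * c = c * (h / Nat.gcd c h) - 1 := by
        have h3 : (h / Nat.gcd c h - 1) * c = c * (h / Nat.gcd c h) - c := by
          rw [Nat.sub_mul, Nat.mul_comm]; omega
        have h4 : c ≤ c * (h / Nat.gcd c h) := Nat.le_mul_of_pos_right c (by omega)
        omega
      have e2 : c * (h / Nat.gcd c h) - 1 = (c / Nat.gcd c h - 1) * h + (h - 1) := by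
        rw [hck, Nat.sub_mul]
        have : h ≤ (c / Nat.gcd c h) * h := by
          calc h = 1 * h := (one_mul h).symm
          _ ≤ (c / Nat.gcd c h) * h := by
            apply Nat.mul_le_mul_right
            omega
        omega
      rw [e1, e2]
    rw [he, Nat.add_comm, Nat.add_mul_mod_self_right, Nat.mod_eq_of_lt (by omega)]
  classical
  set j0 := Nat.find hex with hj0
  have hj0spec : (c - 1 + j0 * c) % h = h - 1 := Nat.find_spec hex
  have key : ∀ j ≤ j0, f ((c - 1 + j * c) % h) = f (c - 1) := by
    intro j
    induction j with
    | zero => intro _; simp [Nat.mod_eq_of_lt (show c - 1 < h by omega)]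
    | succ j ih =>
      intro hj
      have hlt : j < j0 := by omega
      have hne : (c - 1 + j * c) % h ≠ h - 1 := Nat.find_min hex hlt
      have hTlt : (c - 1 + j * c) % h < h := Nat.mod_lt _ hh
      have hstep' := hstep ((c - 1 + j * c) % h) (by omega)
      have harith : ((c - 1 + j * c) % h + c) % h = (c - 1 + (j+1) * c) % h := by
        rw [Nat.mod_add_mod]
        congr 1
        ring
      rw [← ih (by omega), hstep', hmod ((c - 1 + j * c) % h + c), harith]
  have := key j0 le_rfl
  rw [hj0spec] at this
  exact this.symm

theorem two_le_occ (w v : List A) (i1 i2 : ℕ) (hne : i1 ≠ i2)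
    (h1 : i1 + w.length ≤ v.length ∧ (v.drop i1).take w.length = w)
    (h2 : i2 + w.length ≤ v.length ∧ (v.drop i2).take w.length = w) :
    2 ≤ occ w v := by
  unfold occ
  rw [List.countP_eq_length_filter]
  have hm1 : i1 ∈ (List.range (v.length + 1)).filter
      (fun i => decide (i + w.length ≤ v.length ∧ (v.drop i).take w.length = w)) := by
    rw [List.mem_filter]
    exact ⟨List.mem_range.mpr (by omega), by simpa using h1⟩
  have hm2 : i2 ∈ (List.range (v.length + 1)).filter
      (fun i => decide (i + w.length ≤ v.length ∧ (v.drop i).take w.length = w)) := by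
    rw [List.mem_filter]
    exact ⟨List.mem_range.mpr (by omega), by simpa using h2⟩
  exact two_le_length_of_two_mem hm1 hm2 hne

theorem occ_eq_one (w v : List A) (i0 : ℕ)
    (h0 : i0 + w.length ≤ v.length ∧ (v.drop i0).take w.length = w)
    (huniq : ∀ i, i + w.length ≤ v.length → (v.drop i).take w.length = w → i = i0) :
    occ w v = 1 := by
  unfold occ
  have hcong : ∀ a ∈ List.range (v.length + 1),
      ((fun i => decide (i + w.length ≤ v.length ∧ (v.drop i).take w.length = w)) a = true ↔
        (a == i0) = true) := by
    intro a _
    simp only [decide_eq_true_eq, beq_iff_eq]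
    constructor
    · intro ⟨ha, hb⟩; exact huniq a ha hb
    · intro h; subst h; exact h0
  rw [List.countP_congr hcong]
  have : (List.range (v.length + 1)).countP (fun a => a == i0) =
      (List.range (v.length + 1)).count i0 := rfl
  rw [this]
  exact List.count_eq_one_of_mem List.nodup_range (List.mem_range.mpr (by omega))


end ZL

theorem z_factorization (x : ℕ → A) (u : ℕ → List A) (hu1 : u 1 = [])
    (hu : ∀ n : ℕ, 1 ≤ n → IsPalClosure (u n ++ [x n]) (u (n + 1))) (y : ℕ → A) (d : ℕ → ℕ) (g : ℕ → ℕ)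
    (hy : ∀ m : ℕ, 1 ≤ m → y m ≠ y (m + 1)) (hd : ∀ m : ℕ, 1 ≤ m → 0 < d m)
    (hg : ∀ m : ℕ, g m = (∑ i ∈ Finset.Icc 1 (m - 1), d i) + 1)
    (hx : ∀ m : ℕ, 1 ≤ m → ∀ n : ℕ, g m ≤ n → n < g (m + 1) → x n = y m) (s : ℕ → A) (hs : ∀ n : ℕ, 1 ≤ n → PrefInf (u n) s) (z : ℕ → List A)
    (hz1 : z 1 = [y 1])
    (hzk : ∀ k : ℕ, 2 ≤ k →
      z k = ((List.replicate (d (k - 1)) (hW x (g (k - 1) - 1)).reverse).flatten).tail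
        ++ [y k]) :
    IsZFact s z := by
  classical
  have hA := ZL.A_all x u hu1 hu
  have hg1 : g 1 = 1 := by rw [hg]; simp
  have hgsucc : ∀ k, 1 ≤ k → g (k+1) = g k + d k := by
    intro k hk
    rw [hg, hg]
    have e1 : k + 1 - 1 = k := by omega
    rw [e1]
    rw [show k = k - 1 + 1 by omega, Finset.sum_Icc_succ_top (by omega : 1 ≤ k - 1 + 1)]
    rw [show k - 1 + 1 = k by omega]
    omega
  have hgpos : ∀ k, 1 ≤ g k := by intro k; rw [hg]; omega
  -- constancy of hW on blocks
  have hconstblock : ∀ k, 1 ≤ k → ∀ j, j ≤ d k - 1 → hW x (g k - 1 + j) = hW x (g k - 1) := by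
    intro k hk j
    induction j with
    | zero => intro _; rfl
    | succ j ih =>
      intro hj
      have hgp := hgpos k
      have hgs := hgsucc k hk
      have hx1 : x (g k + j + 1) = y k := by
        refine hx k hk _ (by omega) (by omega)
      have hx2 : x (g k + j) = y k := by
        refine hx k hk _ (by omega) (by omega)
      have hcst := ZL.hW_const x (g k + j) (by omega) (by rw [hx1, hx2])
      have e1 : g k - 1 + (j + 1) = g k + j := by omega
      have e2 : g k + j - 1 = g k - 1 + j := by omega
      rw [e1, hcst, e2, ih (by omega)]
  -- block structure
  have hublock : ∀ k, 1 ≤ k → ∀ j, j ≤ d k →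
      u (g k + j) = ZL.rep j (hW x (g k - 1)) ++ u (g k) := by
    intro k hk j
    induction j with
    | zero => intro _; simp [ZL.rep_zero]
    | succ j ih =>
      intro hj
      have hgp := hgpos k
      have hstep : u (g k + j + 1) = hW x (g k + j - 1) ++ u (g k + j) := hA (g k + j) (by omega)
      have e2 : g k + j - 1 = g k - 1 + j := by omega
      have e3 : g k + (j + 1) = g k + j + 1 := by omega
      rw [e3, hstep, e2, hconstblock k hk j (by omega), ih (by omega), ZL.rep_succ,
        List.append_assoc]
  -- appended block form
  have hublock2 : ∀ k, 1 ≤ k →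
      u (g (k+1)) = u (g k) ++ ZL.rep (d k) (hW x (g k - 1)).reverse := by
    intro k hk
    have h1 : u (g (k+1)) = ZL.rep (d k) (hW x (g k - 1)) ++ u (g k) := by
      rw [hgsucc k hk]; exact hublock k hk (d k) le_rfl
    have hpal1 : (u (g (k+1))).reverse = u (g (k+1)) := ZL.u_pal x u hu1 hu _ (hgpos _)
    have hpal2 : (u (g k)).reverse = u (g k) := ZL.u_pal x u hu1 hu _ (hgpos _)
    calc u (g (k+1)) = (u (g (k+1))).reverse := hpal1.symm
      _ = (ZL.rep (d k) (hW x (g k - 1)) ++ u (g k)).reverse := by rw [← h1]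
      _ = (u (g k)).reverse ++ (ZL.rep (d k) (hW x (g k - 1))).reverse := by
            rw [List.reverse_append]
      _ = u (g k) ++ ZL.rep (d k) (hW x (g k - 1)).reverse := by
            rw [hpal2, ZL.rep_reverse]
  -- x at block start
  have hxg : ∀ k, 1 ≤ k → x (g k) = y k := by
    intro k hk
    refine hx k hk _ le_rfl ?_
    rw [hgsucc k hk]
    have := hd k hk
    omega
  -- H ends with y k
  have hHlast : ∀ k, 1 ≤ k → ∃ M', hW x (g k - 1) = M' ++ [y k] := by
    intro k hk
    obtain ⟨M', hM'⟩ := ZL.muW_eq_concat x (g k - 1) (x (g k - 1 + 1))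
    refine ⟨M', ?_⟩
    rw [hW, hM']
    congr 2
    rw [show g k - 1 + 1 = g k by have := hgpos k; omega]
    exact hxg k hk
  have hHpos : ∀ n, 0 < (hW x n).length := by
    intro n
    have := ZL.muW_ne_nil x n (x (n+1))
    rw [hW]
    exact List.length_pos_of_ne_nil this
  -- cat formula
  have hcat : ∀ k, 1 ≤ k → cat z k = u (g k) ++ [y k] := by
    intro k hk
    induction k with
    | zero => omega
    | succ k ih =>
      rcases Nat.eq_zero_or_pos k with rfl | hk1
      · show cat z 1 = u (g 1) ++ [y 1]
        rw [hg1, hu1]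
        show ((List.range' 1 1).map z).flatten = [] ++ [y 1]
        simp [hz1]
      · have hcatsucc : cat z (k+1) = cat z k ++ z (k+1) := by
          show ((List.range' 1 (k+1)).map z).flatten = _
          have : List.range' 1 (k+1) = List.range' 1 k ++ [1 + k] := by
            simpa using List.range'_concat (step := 1) (s := 1) (n := k)
          rw [this]
          simp [cat]
          rw [show 1 + k = k + 1 by omega]
        have hz' : z (k+1) = (ZL.rep (d k) (hW x (g k - 1)).reverse).tail ++ [y (k+1)] := by
          have := hzk (k+1) (by omega)
          rw [show k + 1 - 1 = k by omega] at this
          exact this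
        obtain ⟨M', hM'⟩ := hHlast k hk1
        have hPhead : (hW x (g k - 1)).reverse = [y k] ++ M'.reverse := by
          rw [hM']; simp
        have hdk := hd k hk1
        have hrepP : ZL.rep (d k) (hW x (g k - 1)).reverse =
            [y k] ++ (M'.reverse ++ ZL.rep (d k - 1) (hW x (g k - 1)).reverse) := by
          rw [show d k = (d k - 1) + 1 by omega, ZL.rep_succ, hPhead, List.append_assoc]
          rw [show d k - 1 + 1 - 1 = d k - 1 by omega]
        have htail : [y k] ++ (ZL.rep (d k) (hW x (g k - 1)).reverse).tail =
            ZL.rep (d k) (hW x (g k - 1)).reverse := by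
          rw [hrepP]
          rfl
        rw [hcatsucc, ih hk1, hz', hublock2 k hk1]
        rw [List.append_assoc, List.append_assoc]
        congr 1
        rw [← List.append_assoc, htail]
  -- prefix of s
  have hprefinf : ∀ k, 1 ≤ k → PrefInf (cat z k) s := by
    intro k hk
    have h1 : u (g k) ++ [y k] <+: u (g k + 1) := by
      have := (hu (g k) (hgpos k)).1
      rwa [hxg k hk] at this
    rw [hcat k hk]
    intro i hi
    have hlen : (u (g k) ++ [y k]).length ≤ (u (g k + 1)).length := h1.length_le
    have h2 : (u (g k) ++ [y k])[i] = (u (g k + 1))[i]'(by omega) := h1.getElem _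
    rw [h2]
    exact hs (g k + 1) (by omega) i (by omega)
  -- main goal
  intro m hm
  rcases Nat.lt_or_ge m 2 with hm2 | hm2
  · -- m = 1
    have hm1 : m = 1 := by omega
    subst hm1
    have hcat1 : cat z 1 = [y 1] := by
      rw [hcat 1 le_rfl, hg1, hu1]; rfl
    refine ⟨by simp [hz1], hprefinf 1 le_rfl, ?_, ?_⟩
    · apply ZL.occ_eq_one _ _ 0
      · constructor
        · simp [hcat1, hz1]
        · simp [hcat1, hz1]
      · intro i h1 h2
        rw [hcat1, hz1] at h1
        simp at h1
        omega
    · intro p hp hpne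
      have hp0 : p = [] := by
        rw [hz1] at hp hpne
        cases p with
        | nil => rfl
        | cons a t =>
          exfalso
          have ht : t = [] := by
            have hl := hp.length_le
            simp at hl
            exact hl
          subst ht
          have ha : a = y 1 := by
            obtain ⟨r, hr⟩ := hp
            simp at hr
            exact hr.1
          subst ha
          exact hpne rfl
      subst hp0
      apply ZL.two_le_occ _ _ 0 1 (by omega)
      · exact ⟨by simp, by simp⟩
      · refine ⟨by simp [hcat1], by simp⟩
  · -- m ≥ 2
    obtain ⟨kk, rfl⟩ : ∃ kk, m = kk + 1 := ⟨m - 1, by omega⟩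
    have hkk : 1 ≤ kk := by omega
    obtain ⟨M', hM'⟩ := hHlast kk hkk
    have hddpos : 0 < d kk := hd kk hkk
    have hh : 0 < (hW x (g kk - 1)).length := hHpos _
    -- abbreviations via obtain (definitional equalities)
    set H := hW x (g kk - 1) with hHdef
    set P := H.reverse with hPdef
    set dd := d kk with hdddef
    have hPlen : P.length = H.length := by rw [hPdef, List.length_reverse]
    have hun' : u (g kk + 1) = H ++ u (g kk) := hA (g kk) (hgpos kk)
    have hU1 : u (g (kk+1)) = ZL.rep dd H ++ u (g kk) := by
      rw [hgsucc kk hkk]; exact hublock kk hkk dd le_rfl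
    have hU2 : u (g (kk+1)) = u (g kk) ++ ZL.rep dd P := hublock2 kk hkk
    have hUpal : (u (g (kk+1))).reverse = u (g (kk+1)) := ZL.u_pal x u hu1 hu _ (hgpos _)
    have hU'pal : (u (g kk)).reverse = u (g kk) := ZL.u_pal x u hu1 hu _ (hgpos _)
    have hreplen : (ZL.rep dd P).length = dd * H.length := by rw [ZL.rep_length, hPlen]
    have hreplenH : (ZL.rep dd H).length = dd * H.length := by rw [ZL.rep_length]
    have hddh : 0 < dd * H.length := Nat.mul_pos hddpos hh
    have hHle : H.length ≤ dd * H.length := Nat.le_mul_of_pos_left _ hddpos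
    have hUlen : (u (g (kk+1))).length = (u (g kk)).length + dd * H.length := by
      rw [hU2]; simp [hreplen]
    have hgrow : H.length ≤ (u (g kk)).length + 1 := by
      have hgw := ZL.u_growth x u hu1 hu (g kk) (hgpos kk)
      have h2 : (u (g kk + 1)).length = H.length + (u (g kk)).length := by
        rw [hun']; simp
      omega
    have hzm : z (kk+1) = (ZL.rep dd P).tail ++ [y (kk+1)] := by
      rw [hzk (kk+1) (by omega), show kk+1-1 = kk by omega]
      rfl
    clear_value H P dd
    have hzlen : (z (kk+1)).length = dd * H.length := by
      rw [hzm]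
      simp [List.length_tail, hreplen]
      omega
    have hcatm : cat z (kk+1) = u (g (kk+1)) ++ [y (kk+1)] := hcat (kk+1) (by omega)
    have hdrop0 : (u (g (kk+1)) ++ [y (kk+1)]).drop ((u (g kk)).length + 1) = z (kk+1) := by
      rw [hU2, List.append_assoc, List.drop_length_add_append,
        List.drop_append_of_le_length (by omega), List.drop_one, ← hzm]
    -- periodicity
    have hUH : u (g (kk+1)) <+: H ++ u (g (kk+1)) := by
      conv_rhs => rw [hU1, ← List.append_assoc, ZL.rep_comm, List.append_assoc]
      rw [hU1]
      refine (List.prefix_append_right_inj _).mpr ?_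
      rw [← hun']
      exact ZL.u_step_prefix x u hu1 hu _ (hgpos kk)
    have hUper := ZL.periodic_of_prefix H (u (g (kk+1))) hh hUH
    have hrepperH := ZL.periodic_of_prefix H (ZL.rep dd H) hh
      (by rw [ZL.rep_comm]; exact List.prefix_append _ _)
    have hHlastget : ∀ (w : H.length - 1 < H.length), H[H.length-1]'(by omega) = y kk := by
      intro w
      have hMlen : M'.length = H.length - 1 := by
        have := congrArg List.length hM'
        simp at this
        omega
      rw [List.getElem_of_eq hM' (by omega), List.getElem_append_right (by omega)]
      simp [hMlen]
    refine ⟨?_, hprefinf (kk+1) (by omega), ?_, ?_⟩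
    · rw [hzm]; simp
    · -- occurrence count = 1
      rw [hcatm]
      apply ZL.occ_eq_one _ _ ((u (g kk)).length + 1)
      · refine ⟨by simp [hzlen, hUlen]; omega, ?_⟩
        rw [hdrop0, List.take_length]
      · intro i hile htake
        by_contra hine
        have hile2 : i + dd * H.length ≤ (u (g (kk+1))).length + 1 := by
          rw [hzlen] at hile
          simpa using hile
        have hiU : i ≤ (u (g kk)).length := by omega
        have hwin : i + dd * H.length ≤ (u (g (kk+1))).length := by omega
        rw [hzlen] at htake
        have htake2 : ((u (g (kk+1))).drop i).take (dd*H.length) = z (kk+1) := by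
          rw [← htake, List.drop_append_of_le_length (by omega),
            List.take_append_of_le_length (by simp; omega)]
        have hseg := ZL.seg_reverse (u (g (kk+1))) i (dd*H.length) (by omega)
        rw [hUpal] at hseg
        have hrevocc : ((u (g (kk+1))).drop ((u (g (kk+1))).length - i - dd*H.length)).take (dd*H.length)
            = (z (kk+1)).reverse := by
          rw [← hseg, htake2]
        set jj := (u (g (kk+1))).length - i - dd*H.length with hjjdef
        clear_value jj
        have hjwin : jj + dd * H.length ≤ (u (g (kk+1))).length := by omega
        have hrevz : (z (kk+1)).reverse = [y (kk+1)] ++ (ZL.rep dd H).take (dd*H.length - 1) := by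
          rw [hzm, List.reverse_append]
          have e1 : ([y (kk+1)] : List A).reverse = [y (kk+1)] := by simp
          rw [e1]
          congr 1
          rw [← List.drop_one, List.reverse_drop, ZL.rep_reverse, hreplen]
          rw [hPdef, List.reverse_reverse]
        have hlenRHS : ([y (kk+1)] ++ (ZL.rep dd H).take (dd*H.length - 1)).length = dd*H.length := by
          simp [List.length_take, hreplenH]
          omega
        have hext : ∀ t (ht : t < dd*H.length), (u (g (kk+1)))[jj + t]'(by omega) =
            ([y (kk+1)] ++ (ZL.rep dd H).take (dd*H.length - 1))[t]'(by omega) := by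
          intro t ht
          have h1 := List.getElem_of_eq (hrevocc.trans hrevz)
            (show t < (((u (g (kk+1))).drop jj).take (dd*H.length)).length by simp; omega)
          simp only [List.getElem_take, List.getElem_drop] at h1
          exact h1
        have hUj : (u (g (kk+1)))[jj]'(by omega) = y (kk+1) := by
          have h1 := hext 0 (by omega)
          have h2 : ([y (kk+1)] ++ (ZL.rep dd H).take (dd*H.length - 1))[0]'(by omega) = y (kk+1) := by
            rw [List.getElem_append_left (by simp : (0:ℕ) < ([y (kk+1)] : List A).length)]
            rfl
          simpa using h1.trans h2
        have hmatch : ∀ r (hr : r + 1 < dd*H.length),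
            (u (g (kk+1)))[jj + 1 + r]'(by omega) = H[r % H.length]'(Nat.mod_lt _ hh) := by
          intro r hr
          have h1 := hext (1 + r) (by omega)
          have h2 : ([y (kk+1)] ++ (ZL.rep dd H).take (dd*H.length - 1))[1 + r]'(by omega) =
              ((ZL.rep dd H).take (dd*H.length - 1))[r]'(by simp [List.length_take, hreplenH]; omega) := by
            rw [List.getElem_append_right (by simp : ([y (kk+1)] : List A).length ≤ 1 + r)]
            congr 1
            simp
          have h3 : ((ZL.rep dd H).take (dd*H.length - 1))[r]'(by simp [List.length_take, hreplenH]; omega)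
              = (ZL.rep dd H)[r]'(by omega) := by
            simp only [List.getElem_take]
          have h4 := hrepperH r (by omega)
          have h5 : jj + (1 + r) = jj + 1 + r := by omega
          simp only [h5] at h1
          rw [h1, h2, h3, h4]
        -- modular setup
        set c := (jj + 1) % H.length with hcdef
        have hclt : c < H.length := Nat.mod_lt _ hh
        set f : ℕ → A := fun t => H.get ⟨t % H.length, Nat.mod_lt t hh⟩ with hfdef
        have hfeq : ∀ a b, a % H.length = b % H.length → f a = f b := by
          intro a b hab
          simp only [hfdef]
          exact congrArg H.get (Fin.ext hab)
        have hfget : ∀ t (w : t % H.length < H.length), f t = H[t % H.length]'w := fun t w => rfl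
        have hmodf : ∀ t, f t = f (t % H.length) :=
          fun t => hfeq t (t % H.length) (Nat.mod_mod_of_dvd t (dvd_refl H.length)).symm
        have hUf : ∀ r (hr : r < (u (g (kk+1))).length), (u (g (kk+1)))[r]'hr = f r := by
          intro r hr
          rw [hUper r hr]
          rfl
        have hdm := Nat.div_add_mod (jj+1) H.length
        rcases Nat.eq_zero_or_pos c with hc0 | hc1
        · -- aligned case
          have hq : H.length * ((jj+1)/H.length) = jj + 1 := by omega
          have hq1 : 1 ≤ (jj+1)/H.length := by
            rcases Nat.eq_zero_or_pos ((jj+1)/H.length) with h0 | h1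
            · rw [h0] at hq; simp at hq
            · exact h1
          obtain ⟨q1, hq1e⟩ : ∃ q1, (jj+1)/H.length = q1 + 1 := ⟨(jj+1)/H.length - 1, by omega⟩
          have hexp : H.length * (q1 + 1) = H.length * q1 + H.length := by ring
          rw [hq1e] at hq
          have hjjval : jj = H.length * q1 + (H.length - 1) := by omega
          have hjjmod : jj % H.length = H.length - 1 := by
            rw [hjjval, Nat.mul_add_mod, Nat.mod_eq_of_lt (by omega)]
          have hfinal : (u (g (kk+1)))[jj]'(by omega) = y kk := by
            rw [hUper jj (by omega)]
            have := ZL.getElem_idx_congr H (jj % H.length) (H.length - 1) hjjmod (Nat.mod_lt _ hh)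
            rw [this, hHlastget (by omega)]
          rw [hUj] at hfinal
          exact hy kk hkk (hfinal ▸ rfl)
        · -- chain case
          have hjjmod : jj % H.length = c - 1 := by
            have hjjval : jj = H.length * ((jj+1)/H.length) + (c - 1) := by omega
            rw [hjjval, Nat.mul_add_mod, Nat.mod_eq_of_lt (by omega)]
          have hstepf : ∀ r, r + 2 ≤ H.length → f r = f (r + c) := by
            intro r hr
            have hm1 := hmatch r (by omega)
            have hm2 : (u (g (kk+1)))[jj+1+r]'(by omega) = f (jj+1+r) := hUf _ (by omega)
            have hm3 : f (jj + 1 + r) = f r := by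
              rw [← hm2, hm1]
              exact (hfget r (Nat.mod_lt _ hh)).symm
            have hmodeq : (jj + 1 + r) % H.length = (r + c) % H.length := by
              conv_lhs => rw [show jj + 1 + r = r + (jj + 1) by ring]
              rw [Nat.add_mod r (jj+1), ← hcdef, Nat.add_mod r c,
                Nat.mod_eq_of_lt hclt]
            rw [← hm3]
            exact hfeq _ _ hmodeq
          have hchain := ZL.chain_lemma H.length c f hh hc1 hclt hmodf hstepf
          have hfc : f (c - 1) = y (kk+1) := by
            have h1 : f jj = f (c - 1) :=
              hfeq _ _ (by rw [hjjmod, Nat.mod_eq_of_lt (by omega)])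
            rw [← h1, ← hUf jj (by omega), hUj]
          have hfh : f (H.length - 1) = y kk := by
            rw [hfget (H.length - 1) (Nat.mod_lt _ hh)]
            have := ZL.getElem_idx_congr H ((H.length - 1) % H.length) (H.length - 1)
              (Nat.mod_eq_of_lt (by omega)) (Nat.mod_lt _ hh)
            rw [this, hHlastget (by omega)]
          rw [hfc, hfh] at hchain
          exact hy kk hkk hchain.symm
    · -- proper prefixes occur at least twice
      intro p hp hpne
      have hpl : p.length + 1 ≤ dd*H.length := by
        have h1 := hp.length_le
        rw [hzlen] at h1
        rcases Nat.lt_or_ge p.length (dd*H.length) with h2 | h2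
        · omega
        · exact absurd (hp.eq_of_length_le (by rw [hzlen]; omega)) hpne
      have hptake : p = (z (kk+1)).take p.length := List.prefix_iff_eq_take.mp hp
      have hUP' : u (g kk) ++ P = H ++ u (g kk) := by
        have h1 : (u (g kk + 1)).reverse = u (g kk + 1) := ZL.u_pal x u hu1 hu _ (by omega)
        rw [hun'] at h1
        calc u (g kk) ++ P = (H ++ u (g kk)).reverse := by
              rw [List.reverse_append, hU'pal, hPdef]
          _ = H ++ u (g kk) := h1
      have hdropU' : (u (g kk)).drop ((u (g kk)).length + 1 - H.length) = P.drop 1 := by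
        have h1 : (H ++ u (g kk)).drop (H.length + ((u (g kk)).length + 1 - H.length)) =
            (u (g kk)).drop ((u (g kk)).length + 1 - H.length) := by
          rw [show (H ++ u (g kk)).drop (H.length + ((u (g kk)).length + 1 - H.length)) =
            (H ++ u (g kk)).drop (H.length + ((u (g kk)).length + 1 - H.length)) by rfl]
          rw [List.drop_length_add_append]
        have h2 : H.length + ((u (g kk)).length + 1 - H.length) = (u (g kk)).length + 1 := by omega
        rw [h2] at h1
        rw [← h1, ← hUP']
        rw [show (u (g kk)).length + 1 = (u (g kk)).length + 1 by rfl]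
        rw [show ((u (g kk)) ++ P).drop ((u (g kk)).length + 1) = P.drop 1 from List.drop_length_add_append 1]
      have hdropi1 : (u (g (kk+1)) ++ [y (kk+1)]).drop ((u (g kk)).length + 1 - H.length) =
          (ZL.rep dd P).drop 1 ++ (P ++ [y (kk+1)]) := by
        rw [hU2, List.append_assoc,
          List.drop_append_of_le_length (by omega), hdropU']
        have hcomm : P.drop 1 ++ ZL.rep dd P = (ZL.rep dd P).drop 1 ++ P := by
          have e1 : P.drop 1 ++ ZL.rep dd P = (P ++ ZL.rep dd P).drop 1 := by
            rw [List.drop_append_of_le_length (by omega)]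
          have e2 : (ZL.rep dd P).drop 1 ++ P = (ZL.rep dd P ++ P).drop 1 := by
            rw [List.drop_append_of_le_length (by omega)]
          rw [e1, e2, ← ZL.rep_succ, ZL.rep_concat]
        rw [← List.append_assoc, hcomm, List.append_assoc]
      rw [hcatm]
      apply ZL.two_le_occ _ _ ((u (g kk)).length + 1 - H.length) ((u (g kk)).length + 1) (by omega)
      · refine ⟨by simp [hUlen]; omega, ?_⟩
        rw [hdropi1,
          List.take_append_of_le_length (by simp [hreplen]; omega)]
        conv_rhs => rw [hptake, hzm]
        rw [List.take_append_of_le_length (by simp [List.length_tail, hreplen]; omega),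
          List.drop_one]
      · refine ⟨by simp [hUlen]; omega, ?_⟩
        rw [hdrop0]
        exact hptake.symm
end
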